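/- The function d(ℓ) = sqrt(1 + log 2 − 2ℓ − sqrt(1 − 4ℓ²) + log ℓ + (1/2) log((1 + sqrt(1 − 4ℓ²))/(1 − sqrt(1 − 4ℓ²)))) satisfies d(ℓ) → 0 as ℓ → 1/2⁻, and the expression under the square root is nonnegative for ℓ ∈ (0, 1/2). -/

import Mathlib

open Real MeasureTheory Filter

/-- Squared distance of the cardioid model with concentration `ℓ` from the base model
at `ℓ₀ → 1/2`. -/
noncomputable def cardioidSqDist (ℓ : ℝ) : ℝ :=
  1 + Real.log 2 - 2 * ℓ - Real.sqrt (1 - 4 * ℓ^2) + Real.log ℓ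
    + (1/2) * Real.log ((1 + Real.sqrt (1 - 4 * ℓ^2)) / (1 - Real.sqrt (1 - 4 * ℓ^2)))

lemma quad_le_log_one_add {s : ℝ} (hs : 0 ≤ s) : s - s^2/2 ≤ Real.log (1 + s) := by
  set f : ℝ → ℝ := fun x => Real.log (1 + x) - x + x^2/2 with hf
  have hderiv : ∀ x : ℝ, 0 ≤ x → HasDerivAt f (1/(1+x) - 1 + x) x := by
    intro x hx
    have h1 : HasDerivAt (fun y : ℝ => 1 + y) 1 x := (hasDerivAt_id x).const_add 1
    have h2 : HasDerivAt (fun y : ℝ => Real.log (1 + y)) (1/(1+x)) x := by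
      have := (Real.hasDerivAt_log (by linarith : (1:ℝ)+x ≠ 0)).comp x h1
      simpa [one_div, Function.comp_def] using this
    have h3 : HasDerivAt (fun y : ℝ => y^2/2) x x := by
      have := (hasDerivAt_pow 2 x).div_const 2
      simpa using this
    exact (h2.sub (hasDerivAt_id x)).add h3
  have hmono : MonotoneOn f (Set.Ici (0:ℝ)) := by
    apply monotoneOn_of_deriv_nonneg (convex_Ici 0)
    · exact ContinuousOn.add
        (ContinuousOn.sub
          (Real.continuousOn_log.comp (by fun_prop) (by intro x hx; simp at hx ⊢; intro h; linarith))
          (continuousOn_id))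
        (by fun_prop)
    · intro x hx
      rw [interior_Ici] at hx
      have hx' : 0 < x := hx
      exact ((hderiv x hx'.le).differentiableAt).differentiableWithinAt
    · intro x hx
      rw [interior_Ici] at hx
      have hx' : 0 < x := hx
      rw [(hderiv x hx'.le).deriv]
      have h1x : (0:ℝ) < 1 + x := by linarith
      have : (1:ℝ) - x ≤ 1/(1+x) := by
        rw [le_div_iff₀ h1x]; nlinarith
      linarith
  have h0 : f 0 ≤ f s := hmono (by simp) (by simpa using hs) hs
  simp [hf] at h0
  linarith

theorem cardioid_distance_boundary :
    Tendsto (fun ℓ => Real.sqrt (cardioidSqDist ℓ))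
      (nhdsWithin (1/2 : ℝ) (Set.Iio (1/2))) (nhds 0) ∧
    ∀ ℓ ∈ Set.Ioo (0:ℝ) (1/2), 0 ≤ cardioidSqDist ℓ := by
  constructor
  · -- continuity part
    have hsq : Continuous (fun ℓ : ℝ => Real.sqrt (1 - 4 * ℓ^2)) := by fun_prop
    have hsval : Real.sqrt (1 - 4 * (1/2:ℝ)^2) = 0 := by norm_num
    have hc : ContinuousAt cardioidSqDist (1/2) := by
      unfold cardioidSqDist
      apply ContinuousAt.add
      apply ContinuousAt.add
      · apply ContinuousAt.sub
        · fun_prop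
        · exact hsq.continuousAt
      · exact Real.continuousAt_log (by norm_num)
      · apply ContinuousAt.mul continuousAt_const
        apply ContinuousAt.log
        · apply ContinuousAt.div
          · exact (continuous_const.add hsq).continuousAt
          · exact (continuous_const.sub hsq).continuousAt
          · rw [hsval]; norm_num
        · rw [hsval]; norm_num
    have hval : cardioidSqDist (1/2) = 0 := by
      unfold cardioidSqDist
      rw [show (1 - 4 * ((1:ℝ)/2)^2) = 0 by norm_num, Real.sqrt_zero,
        show (1:ℝ)/2 = 2⁻¹ by norm_num, Real.log_inv]
      norm_num
    have h1 : Tendsto cardioidSqDist (nhdsWithin (1/2 : ℝ) (Set.Iio (1/2))) (nhds 0) := by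
      rw [← hval]
      exact hc.continuousWithinAt.tendsto
    have h2 := (Real.continuous_sqrt.continuousAt (x := (0:ℝ))).tendsto
    rw [Real.sqrt_zero] at h2
    exact h2.comp h1
  · rintro ℓ ⟨h0, h2⟩
    set s := Real.sqrt (1 - 4 * ℓ^2) with hs
    have hℓ2 : 4 * ℓ^2 < 1 := by nlinarith
    have hspos : 0 < s := Real.sqrt_pos.2 (by linarith)
    have hssq : s^2 = 1 - 4*ℓ^2 := Real.sq_sqrt (by linarith)
    have hs1 : s < 1 := by nlinarith
    have hlog2 : Real.log 2 + Real.log ℓ = (1/2) * (Real.log (1+s) + Real.log (1-s)) := by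
      have heq : (2*ℓ)^2 = (1+s)*(1-s) := by nlinarith
      have hp : Real.log ((2*ℓ)^2) = 2 * Real.log (2*ℓ) := by
        rw [Real.log_pow]; norm_num
      rw [heq, Real.log_mul (by linarith) (by linarith)] at hp
      have hm : Real.log (2*ℓ) = Real.log 2 + Real.log ℓ := Real.log_mul two_ne_zero h0.ne'
      linarith
    have hlogdiv : Real.log ((1+s)/(1-s)) = Real.log (1+s) - Real.log (1-s) :=
      Real.log_div (by linarith) (by linarith)
    have hrw : cardioidSqDist ℓ = 1 - 2*ℓ - s + Real.log (1+s) := by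
      unfold cardioidSqDist
      rw [← hs, hlogdiv]
      linarith [hlog2]
    rw [hrw]
    have hbound : 2*ℓ ≤ 1 - s^2/2 := by nlinarith
    have hlog := quad_le_log_one_add hspos.le
    linarith
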